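/- With the partition setup {S_j}, functionals ζ_j, and constants Θ_j = ‖ψ_j‖²/(λ_{1,j}|⟨ψ_j, φ_{0,j}⟩|²), define C_Ξ = √(|J| · max_j(|S_j| Θ_j)). Then for every ω > 0 and every f ∈ ℓ²(G) satisfying ‖∇f‖ ≤ √ω ‖f‖_{ℓ²(G)}, one has Σ_{j∈J} Σ_{v∈S_j} |f(v) − ⟨ζ_j, f⟩| ≤ √ω · C_Ξ · Σ_{v∈V(G)} |f(v)|. -/

import Mathlib

open Finset

/-- Weighted gradient norm squared: `‖∇f‖² = (1/2) Σ_{u,v} |f(u)−f(v)|² w(u,v)`. -/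
noncomputable def gradSq {V : Type*} [Fintype V] (w : V → V → ℝ) (f : V → ℂ) : ℝ :=
  (1 / 2) * ∑ u, ∑ v, ‖f u - f v‖ ^ 2 * w u v

/-- Weighted graph Laplacian: `(Lf)(v) = Σ_u (f(v) − f(u)) w(v,u)`. -/
noncomputable def lap {V : Type*} [Fintype V] (w : V → V → ℝ) (f : V → ℂ) : V → ℂ :=
  fun v => ∑ u, (f v - f u) * ((w v u : ℝ) : ℂ)

/-- Inner product on `ℓ²(G)`. -/
noncomputable def ip {V : Type*} [Fintype V] (ψ f : V → ℂ) : ℂ :=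
  ∑ v, (starRingEnd ℂ) (ψ v) * f v

/-- Squared `ℓ²(G)` norm. -/
noncomputable def nsq {V : Type*} [Fintype V] (f : V → ℂ) : ℝ :=
  ∑ v, ‖f v‖ ^ 2

/-- The graph with weight `w` is connected. -/
def GraphConnected {V : Type*} [Fintype V] (w : V → V → ℝ) : Prop :=
  ∀ u v : V, Relation.ReflTransGen (fun a b => 0 < w a b) u v

/-- `lam1` is the first (smallest) nonzero eigenvalue of the Laplacian of `(V, w)`. -/
def IsFirstNonzeroEig {V : Type*} [Fintype V] (w : V → V → ℝ) (lam1 : ℝ) : Prop :=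
  0 < lam1 ∧
  (∃ φ : V → ℂ, φ ≠ 0 ∧ lap w φ = fun v => (lam1 : ℂ) * φ v) ∧
  ∀ (μ : ℝ) (φ : V → ℂ), φ ≠ 0 → (lap w φ = fun v => (μ : ℂ) * φ v) → μ = 0 ∨ lam1 ≤ μ

/-- Gradient norm squared of the induced subgraph on the vertex set `S`. -/
noncomputable def gradSqOn {V : Type*} [Fintype V] (w : V → V → ℝ) (S : Finset V)
    (f : V → ℂ) : ℝ :=
  (1 / 2) * ∑ u ∈ S, ∑ v ∈ S, ‖f u - f v‖ ^ 2 * w u v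

/-- Laplacian of the induced subgraph on the vertex set `S`. -/
noncomputable def lapOn {V : Type*} [Fintype V] (w : V → V → ℝ) (S : Finset V)
    (f : V → ℂ) : V → ℂ :=
  fun v => ∑ u ∈ S, (f v - f u) * ((w v u : ℝ) : ℂ)

/-- The induced subgraph on `S` is connected. -/
def GraphConnectedOn {V : Type*} [Fintype V] (w : V → V → ℝ) (S : Finset V) : Prop :=
  ∀ u ∈ S, ∀ v ∈ S, Relation.ReflTransGen (fun a b => a ∈ S ∧ b ∈ S ∧ 0 < w a b) u v

/-- `lam1` is the first nonzero eigenvalue of the Laplacian of the induced subgraph on `S`. -/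
def IsFirstNonzeroEigOn {V : Type*} [Fintype V] (w : V → V → ℝ) (S : Finset V)
    (lam1 : ℝ) : Prop :=
  0 < lam1 ∧
  (∃ φ : V → ℂ, (∀ v ∉ S, φ v = 0) ∧ φ ≠ 0 ∧
      ∀ v ∈ S, lapOn w S φ v = (lam1 : ℂ) * φ v) ∧
  ∀ (μ : ℝ) (φ : V → ℂ), (∀ v ∉ S, φ v = 0) → φ ≠ 0 →
    (∀ v ∈ S, lapOn w S φ v = (μ : ℂ) * φ v) → μ = 0 ∨ lam1 ≤ μ

set_option linter.unusedSectionVars false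

section Aux

variable {V : Type*} [Fintype V] [DecidableEq V]

/-- The Laplacian of the induced subgraph as a linear operator on `EuclideanSpace`. -/
noncomputable def lapT (w : V → V → ℝ) (S : Finset V) :
    EuclideanSpace ℂ {v : V // v ∈ S} →ₗ[ℂ] EuclideanSpace ℂ {v : V // v ∈ S} where
  toFun a := WithLp.toLp 2 fun v => ∑ u : {v : V // v ∈ S}, (a v - a u) * ((w v.1 u.1 : ℝ) : ℂ)
  map_add' a b := by
    ext v
    simp only [PiLp.add_apply]
    rw [← Finset.sum_add_distrib]
    exact Finset.sum_congr rfl fun u _ => by ring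
  map_smul' c a := by
    ext v
    simp only [PiLp.smul_apply, RingHom.id_apply, smul_eq_mul]
    rw [Finset.mul_sum]
    exact Finset.sum_congr rfl fun u _ => by ring

lemma lapT_apply (w : V → V → ℝ) (S : Finset V) (a : EuclideanSpace ℂ {v : V // v ∈ S})
    (v : {v : V // v ∈ S}) :
    lapT w S a v = ∑ u : {v : V // v ∈ S}, (a v - a u) * ((w v.1 u.1 : ℝ) : ℂ) := rfl

lemma swap_w (w : V → V → ℝ) (hsymm : ∀ u v, w u v = w v u) (S : Finset V)
    (F : {v : V // v ∈ S} → {v : V // v ∈ S} → ℂ) :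
    ∑ v : {v : V // v ∈ S}, ∑ u : {v : V // v ∈ S}, F v u * ((w v.1 u.1 : ℝ) : ℂ)
      = ∑ v : {v : V // v ∈ S}, ∑ u : {v : V // v ∈ S}, F u v * ((w v.1 u.1 : ℝ) : ℂ) := by
  rw [Finset.sum_comm]
  exact Finset.sum_congr rfl fun v _ => Finset.sum_congr rfl fun u _ => by rw [hsymm u.1 v.1]

lemma inner_lapT (w : V → V → ℝ) (S : Finset V) (a b : EuclideanSpace ℂ {v : V // v ∈ S}) :
    (inner ℂ a (lapT w S b) : ℂ)
      = ∑ v : {v : V // v ∈ S}, ∑ u : {v : V // v ∈ S},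
          (starRingEnd ℂ) (a v) * (b v - b u) * ((w v.1 u.1 : ℝ) : ℂ) := by
  simp only [PiLp.inner_apply, RCLike.inner_apply, lapT_apply, Finset.mul_sum, Finset.sum_mul]
  exact Finset.sum_congr rfl fun v _ => Finset.sum_congr rfl fun u _ => by ring

lemma lapT_symm (w : V → V → ℝ) (hsymm : ∀ u v, w u v = w v u) (S : Finset V) :
    (lapT w S).IsSymmetric := by
  intro a b
  rw [← inner_conj_symm, inner_lapT, inner_lapT]
  rw [map_sum]
  have : ∀ v : {v : V // v ∈ S},
      (starRingEnd ℂ) (∑ u : {v : V // v ∈ S},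
        (starRingEnd ℂ) (b v) * (a v - a u) * ((w v.1 u.1 : ℝ) : ℂ))
      = ∑ u : {v : V // v ∈ S}, (b v * (starRingEnd ℂ) (a v)
          - b v * (starRingEnd ℂ) (a u)) * ((w v.1 u.1 : ℝ) : ℂ) := by
    intro v
    rw [map_sum]
    refine Finset.sum_congr rfl fun u _ => ?_
    simp only [map_mul, map_sub, Complex.conj_conj, Complex.conj_ofReal]
    ring
  rw [Finset.sum_congr rfl fun v _ => this v]
  -- LHS: Σ_v Σ_u (b v conj(a v) - b v conj(a u)) w v u
  -- RHS: Σ_v Σ_u (conj(a v) b v - conj(a v) b u) w v u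
  have e1 : ∀ v u : {v : V // v ∈ S},
      (b v * (starRingEnd ℂ) (a v) - b v * (starRingEnd ℂ) (a u)) * ((w v.1 u.1 : ℝ) : ℂ)
      = b v * (starRingEnd ℂ) (a v) * ((w v.1 u.1 : ℝ) : ℂ)
        - (starRingEnd ℂ) (a u) * b v * ((w v.1 u.1 : ℝ) : ℂ) := fun v u => by ring
  have e2 : ∀ v u : {v : V // v ∈ S},
      (starRingEnd ℂ) (a v) * (b v - b u) * ((w v.1 u.1 : ℝ) : ℂ)
      = b v * (starRingEnd ℂ) (a v) * ((w v.1 u.1 : ℝ) : ℂ)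
        - (starRingEnd ℂ) (a v) * b u * ((w v.1 u.1 : ℝ) : ℂ) := fun v u => by ring
  simp only [e1, e2, Finset.sum_sub_distrib]
  exact congrArg₂ (· - ·) rfl (swap_w w hsymm S (fun v u => (starRingEnd ℂ) (a u) * b v))

lemma quadform_eq (w : V → V → ℝ) (hsymm : ∀ u v, w u v = w v u) (S : Finset V)
    (a : EuclideanSpace ℂ {v : V // v ∈ S}) :
    (inner ℂ a (lapT w S a) : ℂ)
      = (((1/2) * ∑ v : {v : V // v ∈ S}, ∑ u : {v : V // v ∈ S},
          ‖a v - a u‖ ^ 2 * w v.1 u.1 : ℝ) : ℂ) := by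
  have h1 := inner_lapT w S a a
  have h2 : (inner ℂ a (lapT w S a) : ℂ)
      = ∑ v : {v : V // v ∈ S}, ∑ u : {v : V // v ∈ S},
          (starRingEnd ℂ) (a u) * (a u - a v) * ((w v.1 u.1 : ℝ) : ℂ) := by
    rw [h1]
    have e1 : ∀ v u : {v : V // v ∈ S},
        (starRingEnd ℂ) (a v) * (a v - a u) * ((w v.1 u.1 : ℝ) : ℂ)
        = (starRingEnd ℂ) (a v) * a v * ((w v.1 u.1 : ℝ) : ℂ)
          - (starRingEnd ℂ) (a v) * a u * ((w v.1 u.1 : ℝ) : ℂ) := fun v u => by ring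
    have e2 : ∀ v u : {v : V // v ∈ S},
        (starRingEnd ℂ) (a u) * (a u - a v) * ((w v.1 u.1 : ℝ) : ℂ)
        = (starRingEnd ℂ) (a u) * a u * ((w v.1 u.1 : ℝ) : ℂ)
          - (starRingEnd ℂ) (a u) * a v * ((w v.1 u.1 : ℝ) : ℂ) := fun v u => by ring
    simp only [e1, e2, Finset.sum_sub_distrib]
    congr 1
    · exact swap_w w hsymm S (fun v u => (starRingEnd ℂ) (a v) * a v)
    · exact swap_w w hsymm S (fun v u => (starRingEnd ℂ) (a v) * a u)
  have h3 : (2 : ℂ) * inner ℂ a (lapT w S a)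
      = ∑ v : {v : V // v ∈ S}, ∑ u : {v : V // v ∈ S},
          ((‖a v - a u‖ ^ 2 : ℝ) : ℂ) * ((w v.1 u.1 : ℝ) : ℂ) := by
    rw [two_mul]
    nth_rewrite 1 [h1]
    nth_rewrite 1 [h2]
    rw [← Finset.sum_add_distrib]
    refine Finset.sum_congr rfl fun v _ => ?_
    rw [← Finset.sum_add_distrib]
    refine Finset.sum_congr rfl fun u _ => ?_
    have key : ((‖a v - a u‖ ^ 2 : ℝ) : ℂ)
        = ((starRingEnd ℂ) (a v) - (starRingEnd ℂ) (a u)) * (a v - a u) := by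
      push_cast
      rw [← map_sub]
      exact (RCLike.conj_mul (a v - a u)).symm
    rw [key]
    ring
  have h4 : (inner ℂ a (lapT w S a) : ℂ) = (2 : ℂ)⁻¹ * ((2:ℂ) * inner ℂ a (lapT w S a)) := by
    ring
  rw [h4, h3]
  push_cast
  ring

end Aux


section Aux2

variable {V : Type*} [Fintype V] [DecidableEq V]

lemma const_of_conn (w : V → V → ℝ) (S : Finset V)
    (hconnS : GraphConnectedOn w S) (g : V → ℂ)
    (h : ∀ u ∈ S, ∀ v ∈ S, 0 < w u v → g u = g v)
    {u v : V} (hu : u ∈ S) (hv : v ∈ S) : g u = g v := by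
  induction hconnS u hu v hv with
  | refl => rfl
  | tail _ h2 ih => exact (ih h2.1).trans (h _ h2.1 _ h2.2.1 h2.2.2)

lemma poincare_gap (w : V → V → ℝ) (hsymm : ∀ u v, w u v = w v u)
    (hnn : ∀ u v, 0 ≤ w u v) (S : Finset V) (hS : S.Nonempty)
    (hconnS : GraphConnectedOn w S)
    (lam1 : ℝ) (hlam : IsFirstNonzeroEigOn w S lam1)
    (x : V → ℂ) (hx0 : ∀ v ∉ S, x v = 0) (hmean : ∑ v ∈ S, x v = 0) :
    lam1 * ∑ v ∈ S, ‖x v‖ ^ 2 ≤ gradSqOn w S x := by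
  classical
  have hT := lapT_symm w hsymm S
  have hn : Module.finrank ℂ (EuclideanSpace ℂ {v : V // v ∈ S})
      = Fintype.card {v : V // v ∈ S} := finrank_euclideanSpace
  let b := hT.eigenvectorBasis hn
  let μ := hT.eigenvalues hn
  let xE : EuclideanSpace ℂ {v : V // v ∈ S} := WithLp.toLp 2 fun v => x v.1
  have heig : ∀ i, lapT w S (b i) = (μ i : ℂ) • b i := fun i =>
    hT.apply_eigenvectorBasis hn i
  have hbne : ∀ i, b i ≠ 0 := fun i => (hT.hasEigenvector_eigenvectorBasis hn i).2
  -- dichotomy for eigenvalues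
  have hdichot : ∀ i, μ i = 0 ∨ lam1 ≤ μ i := by
    intro i
    set φ : V → ℂ := fun v => if h : v ∈ S then b i ⟨v, h⟩ else 0 with hφ
    have hφS : ∀ v ∉ S, φ v = 0 := fun v hv => dif_neg hv
    have hφb : ∀ v : {v : V // v ∈ S}, φ v.1 = b i v := by
      intro v; simp [hφ, v.2]
    have hφne : φ ≠ 0 := by
      intro h
      apply hbne i
      ext v
      have := congrFun h v.1
      rwa [hφb v] at this
    refine hlam.2.2 (μ i) φ hφS hφne ?_
    intro v hv
    have h1 : lapOn w S φ v = lapT w S (b i) ⟨v, hv⟩ := by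
      rw [lapT_apply]
      unfold lapOn
      rw [← Finset.sum_coe_sort S (fun u => (φ v - φ u) * ((w v u : ℝ) : ℂ))]
      refine Finset.sum_congr rfl fun u _ => ?_
      rw [hφb u]
      congr 1
      have : φ v = φ (⟨v, hv⟩ : {v : V // v ∈ S}).1 := rfl
      rw [this, hφb ⟨v, hv⟩]
    rw [h1, heig i]
    have : ((μ i : ℂ) • b i) (⟨v, hv⟩ : {v : V // v ∈ S}) = (μ i : ℂ) * b i ⟨v, hv⟩ := rfl
    rw [this, ← hφb ⟨v, hv⟩]
  -- zero eigenvalue implies orthogonal to xE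
  have hzero : ∀ i, μ i = 0 → (inner ℂ (b i) xE : ℂ) = 0 := by
    intro i h0
    have hq : ∑ v : {v : V // v ∈ S}, ∑ u : {v : V // v ∈ S},
        ‖b i v - b i u‖ ^ 2 * w v.1 u.1 = 0 := by
      have hqf := quadform_eq w hsymm S (b i)
      rw [heig i, h0] at hqf
      simp only [Complex.ofReal_zero, zero_smul, inner_zero_right] at hqf
      have := Complex.ofReal_inj.mp hqf.symm
      linarith
    have hterm : ∀ v : {v : V // v ∈ S}, ∀ u : {v : V // v ∈ S},
        ‖b i v - b i u‖ ^ 2 * w v.1 u.1 = 0 := by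
      have h1 : ∀ v ∈ (univ : Finset {v : V // v ∈ S}),
          ∑ u : {v : V // v ∈ S}, ‖b i v - b i u‖ ^ 2 * w v.1 u.1 = 0 := by
        rw [← Finset.sum_eq_zero_iff_of_nonneg]
        · exact hq
        · intro v _
          exact Finset.sum_nonneg fun u _ => mul_nonneg (sq_nonneg _) (hnn _ _)
      intro v u
      have h2 := h1 v (Finset.mem_univ v)
      have := (Finset.sum_eq_zero_iff_of_nonneg
        (fun u _ => mul_nonneg (sq_nonneg _) (hnn v.1 u.1))).mp h2
      exact this u (Finset.mem_univ u)
    set g : V → ℂ := fun v => if h : v ∈ S then b i ⟨v, h⟩ else 0 with hg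
    have hgb : ∀ v : {v : V // v ∈ S}, g v.1 = b i v := by
      intro v; simp [hg, v.2]
    have hedge : ∀ u ∈ S, ∀ v ∈ S, 0 < w u v → g u = g v := by
      intro u hu v hv hw
      have h3 := hterm ⟨u, hu⟩ ⟨v, hv⟩
      have h4 : ‖b i ⟨u, hu⟩ - b i ⟨v, hv⟩‖ ^ 2 = 0 := by
        rcases mul_eq_zero.mp h3 with h | h
        · exact h
        · exact absurd h (ne_of_gt hw)
      have h5 : b i ⟨u, hu⟩ = b i ⟨v, hv⟩ := by
        have := (pow_eq_zero_iff two_ne_zero).mp h4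
        rw [norm_eq_zero, sub_eq_zero] at this
        exact this
      rw [show g u = b i ⟨u, hu⟩ from hgb ⟨u, hu⟩, show g v = b i ⟨v, hv⟩ from hgb ⟨v, hv⟩, h5]
    obtain ⟨v0, hv0⟩ := hS
    have hconst : ∀ v : {v : V // v ∈ S}, b i v = g v0 := by
      intro v
      rw [← hgb v]
      exact const_of_conn w S hconnS g hedge v.2 hv0
    have : (inner ℂ (b i) xE : ℂ)
        = ∑ v : {v : V // v ∈ S}, (starRingEnd ℂ) (g v0) * x v.1 := by
      rw [PiLp.inner_apply]
      refine Finset.sum_congr rfl fun v _ => ?_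
      rw [RCLike.inner_apply, hconst v]
      exact mul_comm _ _
    rw [this, ← Finset.mul_sum, Finset.sum_coe_sort S x, hmean, mul_zero]
  -- coefficients
  let c : Fin (Fintype.card {v : V // v ∈ S}) → ℂ := fun i => inner ℂ (b i) xE
  have e1 : (inner ℂ xE xE : ℂ) = ((∑ v ∈ S, ‖x v‖ ^ 2 : ℝ) : ℂ) := by
    rw [PiLp.inner_apply]
    push_cast
    rw [← Finset.sum_coe_sort S (fun v => ((‖x v‖ : ℂ)) ^ 2)]
    refine Finset.sum_congr rfl fun v _ => ?_
    rw [RCLike.inner_apply]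
    exact (mul_comm _ _).trans (RCLike.conj_mul (xE v))
  have e2 : (inner ℂ xE xE : ℂ) = ((∑ i, ‖c i‖ ^ 2 : ℝ) : ℂ) := by
    rw [← LinearIsometryEquiv.inner_map_map b.repr xE xE, PiLp.inner_apply]
    push_cast
    refine Finset.sum_congr rfl fun i _ => ?_
    rw [RCLike.inner_apply, OrthonormalBasis.repr_apply_apply]
    exact (mul_comm _ _).trans (RCLike.conj_mul (c i))
  have hnorm : (∑ v ∈ S, ‖x v‖ ^ 2 : ℝ) = ∑ i, ‖c i‖ ^ 2 :=
    Complex.ofReal_inj.mp (e1.symm.trans e2)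
  have e3 : (inner ℂ xE (lapT w S xE) : ℂ) = ((∑ i, μ i * ‖c i‖ ^ 2 : ℝ) : ℂ) := by
    rw [← LinearIsometryEquiv.inner_map_map b.repr xE (lapT w S xE), PiLp.inner_apply]
    have hrep : ∀ i, b.repr (lapT w S xE) i = (μ i : ℂ) * c i := by
      intro i
      rw [OrthonormalBasis.repr_apply_apply]
      rw [← hT (b i) xE, heig i, inner_smul_left, Complex.conj_ofReal]
    push_cast
    refine Finset.sum_congr rfl fun i _ => ?_
    rw [RCLike.inner_apply, hrep i, OrthonormalBasis.repr_apply_apply]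
    rw [show (μ i : ℂ) * c i * (starRingEnd ℂ) (inner ℂ (b i) xE : ℂ)
        = (μ i : ℂ) * ((starRingEnd ℂ) (c i) * c i) from by ring, RCLike.conj_mul]
    simp
  have e4 : (inner ℂ xE (lapT w S xE) : ℂ) = ((gradSqOn w S x : ℝ) : ℂ) := by
    rw [quadform_eq w hsymm S xE]
    norm_cast
    unfold gradSqOn
    congr 1
    rw [← Finset.sum_coe_sort S (fun u => ∑ v ∈ S, ‖x u - x v‖ ^ 2 * w u v)]
    refine Finset.sum_congr rfl fun v _ => ?_
    rw [← Finset.sum_coe_sort S (fun u => ‖x v.1 - x u‖ ^ 2 * w v.1 u)]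
  have hquad : gradSqOn w S x = ∑ i, μ i * ‖c i‖ ^ 2 :=
    Complex.ofReal_inj.mp (e4.symm.trans e3)
  rw [hnorm, hquad, Finset.mul_sum]
  refine Finset.sum_le_sum fun i _ => ?_
  rcases hdichot i with h0 | hle
  · have hc : c i = 0 := hzero i h0
    rw [h0, hc]
    simp
  · exact mul_le_mul_of_nonneg_right hle (sq_nonneg _)

end Aux2


section Aux3

variable {V : Type*} [Fintype V] [DecidableEq V]

lemma nsq_nonneg (f : V → ℂ) : 0 ≤ nsq f :=
  Finset.sum_nonneg fun _ _ => sq_nonneg _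

lemma ip_cs (g h : V → ℂ) : ‖ip g h‖ ^ 2 ≤ nsq g * nsq h := by
  let gE : EuclideanSpace ℂ V := WithLp.toLp 2 g
  let hE : EuclideanSpace ℂ V := WithLp.toLp 2 h
  have h1 : ip g h = (inner ℂ gE hE : ℂ) := by
    rw [PiLp.inner_apply]
    unfold ip
    refine Finset.sum_congr rfl fun v _ => ?_
    rw [RCLike.inner_apply]
    exact mul_comm _ _
  have hg : ‖gE‖ ^ 2 = nsq g := by
    rw [EuclideanSpace.norm_eq, Real.sq_sqrt (Finset.sum_nonneg fun _ _ => sq_nonneg _)]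
    rfl
  have hh : ‖hE‖ ^ 2 = nsq h := by
    rw [EuclideanSpace.norm_eq, Real.sq_sqrt (Finset.sum_nonneg fun _ _ => sq_nonneg _)]
    rfl
  calc ‖ip g h‖ ^ 2 = ‖(inner ℂ gE hE : ℂ)‖ ^ 2 := by rw [h1]
    _ ≤ (‖gE‖ * ‖hE‖) ^ 2 :=
        pow_le_pow_left₀ (norm_nonneg _) (norm_inner_le_norm gE hE) 2
    _ = nsq g * nsq h := by rw [mul_pow, hg, hh]

lemma norm_sq_sub_complex (z s : ℂ) :
    ‖z - s‖ ^ 2 = ‖z‖ ^ 2 + ‖s‖ ^ 2 - 2 * (z * (starRingEnd ℂ) s).re := by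
  simp only [Complex.sq_norm]
  rw [Complex.normSq_sub]

lemma gradSqOn_nonneg (w : V → V → ℝ) (hnn : ∀ u v, 0 ≤ w u v) (S : Finset V) (f : V → ℂ) :
    0 ≤ gradSqOn w S f := by
  unfold gradSqOn
  have : (0:ℝ) ≤ ∑ u ∈ S, ∑ v ∈ S, ‖f u - f v‖ ^ 2 * w u v :=
    Finset.sum_nonneg fun u _ => Finset.sum_nonneg fun v _ =>
      mul_nonneg (sq_nonneg _) (hnn u v)
  linarith

lemma piece (w : V → V → ℝ) (hsymm : ∀ u v, w u v = w v u) (hnn : ∀ u v, 0 ≤ w u v)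
    (S : Finset V) (hconnS : GraphConnectedOn w S) (hcard : 1 < S.card)
    (ψ : V → ℂ) (hsupp : ∀ v ∉ S, ψ v = 0)
    (φ0 : V → ℂ)
    (hφ0 : φ0 = fun v => if v ∈ S then ((1 / Real.sqrt (S.card) : ℝ) : ℂ) else 0)
    (hnz : ip ψ φ0 ≠ 0)
    (lam1 : ℝ) (hlam : IsFirstNonzeroEigOn w S lam1) (f : V → ℂ) :
    ∑ v ∈ S, ‖f v - ip ψ f / ((Real.sqrt S.card : ℂ) * ip ψ φ0)‖ ≤
      Real.sqrt (S.card * (nsq ψ / (lam1 * ‖ip ψ φ0‖ ^ 2))) * Real.sqrt (gradSqOn w S f) := by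
  classical
  have hS : S.Nonempty := Finset.card_pos.mp (by omega)
  have hcard0 : (S.card : ℝ) > 0 := by positivity
  set n : ℝ := (S.card : ℝ) with hn
  have hsq : Real.sqrt n > 0 := Real.sqrt_pos.mpr hcard0
  have hsqC : ((Real.sqrt n : ℝ) : ℂ) ≠ 0 := by
    exact_mod_cast Complex.ofReal_ne_zero.mpr (ne_of_gt hsq)
  set I : ℂ := ip ψ φ0 with hI
  have hIpos : 0 < ‖I‖ := norm_pos_iff.mpr hnz
  set D : ℂ := ((Real.sqrt n : ℝ) : ℂ) * I with hD
  have hD0 : D ≠ 0 := mul_ne_zero hsqC hnz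
  have hlam1 : 0 < lam1 := hlam.1
  -- mean and remainder
  set a : ℂ := (∑ v ∈ S, f v) / (S.card : ℂ) with ha
  set r : V → ℂ := fun v => if v ∈ S then f v - a else 0 with hr
  have hr0 : ∀ v ∉ S, r v = 0 := fun v hv => if_neg hv
  have hcardC : ((S.card : ℕ) : ℂ) ≠ 0 := Nat.cast_ne_zero.mpr (by omega)
  have hrS : ∀ v ∈ S, r v = f v - a := fun v hv => if_pos hv
  have hrsum : ∑ v ∈ S, r v = 0 := by
    rw [Finset.sum_congr rfl hrS, Finset.sum_sub_distrib, Finset.sum_const, nsmul_eq_mul, ha]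
    field_simp
    simp
  have hfva : ∀ v ∈ S, f v = a + r v := fun v hv => by rw [hrS v hv]; ring
  -- gradient equality
  have hgr : gradSqOn w S r = gradSqOn w S f := by
    unfold gradSqOn
    congr 1
    refine Finset.sum_congr rfl fun u hu => Finset.sum_congr rfl fun v hv => ?_
    rw [hrS u hu, hrS v hv]
    congr 2
    ring
  set R : ℝ := ∑ v ∈ S, ‖r v‖ ^ 2 with hR
  have hRnn : 0 ≤ R := Finset.sum_nonneg fun _ _ => sq_nonneg _
  have hgap : lam1 * R ≤ gradSqOn w S f := by
    rw [← hgr]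
    exact poincare_gap w hsymm hnn S hS hconnS lam1 hlam r hr0 hrsum
  -- ψ sums
  have hipφ0 : I = (∑ v ∈ S, (starRingEnd ℂ) (ψ v)) * ((1 / Real.sqrt n : ℝ) : ℂ) := by
    rw [hI]
    unfold ip
    rw [← Finset.sum_subset (Finset.subset_univ S)
      (fun v _ hv => by rw [hsupp v hv]; simp), Finset.sum_mul]
    refine Finset.sum_congr rfl fun v hv => ?_
    rw [hφ0]
    simp [hv, hn]
  have hψsum : ∑ v ∈ S, (starRingEnd ℂ) (ψ v) = ((Real.sqrt n : ℝ) : ℂ) * I := by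
    rw [hipφ0]
    have : ((1 / Real.sqrt n : ℝ) : ℂ) = 1 / ((Real.sqrt n : ℝ) : ℂ) := by push_cast; ring
    rw [this]
    field_simp
  -- ip with r
  have hipr_eq : ip ψ r = ∑ v ∈ S, (starRingEnd ℂ) (ψ v) * r v := by
    unfold ip
    rw [← Finset.sum_subset (Finset.subset_univ S)
      (fun v _ hv => by rw [hsupp v hv]; simp)]
  have hipf : ip ψ f = a * D + ip ψ r := by
    have h1 : ip ψ f = ∑ v ∈ S, (starRingEnd ℂ) (ψ v) * f v := by
      unfold ip
      rw [← Finset.sum_subset (Finset.subset_univ S)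
        (fun v _ hv => by rw [hsupp v hv]; simp)]
    have expand : ∀ v, (starRingEnd ℂ) (ψ v) * (a + r v)
        = a * (starRingEnd ℂ) (ψ v) + (starRingEnd ℂ) (ψ v) * r v := fun v => by ring
    rw [h1, Finset.sum_congr rfl (fun v hv => by rw [hfva v hv]),
      Finset.sum_congr rfl (fun v _ => expand v), Finset.sum_add_distrib,
      ← Finset.mul_sum, hψsum, hipr_eq, hD]
  set s : ℂ := ip ψ r / D with hs
  have hc : ip ψ f / D = a + s := by
    rw [hipf, hs]
    field_simp
  -- the ℓ² distance
  have hdist : ∀ v ∈ S, f v - ip ψ f / D = r v - s := by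
    intro v hv
    rw [hc, hfva v hv]
    ring
  have hsum2 : ∑ v ∈ S, ‖f v - ip ψ f / D‖ ^ 2 = R + n * ‖s‖ ^ 2 := by
    rw [Finset.sum_congr rfl (fun v hv => by rw [hdist v hv])]
    have term : ∀ v, ‖r v - s‖ ^ 2
        = ‖r v‖ ^ 2 + ‖s‖ ^ 2 - 2 * (r v * (starRingEnd ℂ) s).re :=
      fun v => norm_sq_sub_complex (r v) s
    rw [Finset.sum_congr rfl (fun v _ => term v)]
    have hre : ∑ v ∈ S, (r v * (starRingEnd ℂ) s).re
        = ((∑ v ∈ S, r v) * (starRingEnd ℂ) s).re := by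
      rw [Finset.sum_mul, Complex.re_sum]
    have : ∑ v ∈ S, (‖r v‖ ^ 2 + ‖s‖ ^ 2 - 2 * (r v * (starRingEnd ℂ) s).re)
        = R + S.card * ‖s‖ ^ 2 - 2 * ((∑ v ∈ S, r v) * (starRingEnd ℂ) s).re := by
      rw [← hre]
      rw [Finset.sum_sub_distrib, Finset.sum_add_distrib, Finset.sum_const, nsmul_eq_mul,
        ← Finset.mul_sum, hR]
    rw [this, hrsum, hn]
    simp
  -- Cauchy-Schwarz with the projection
  have hφ0n : nsq φ0 = 1 := by
    have hterm : ∀ v ∈ S, ‖φ0 v‖ ^ 2 = 1 / n := by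
      intro v hv
      rw [hφ0]
      simp only [if_pos hv, Complex.norm_real, Real.norm_eq_abs, sq_abs]
      rw [div_pow, one_pow, Real.sq_sqrt (le_of_lt hcard0)]
    unfold nsq
    rw [← Finset.sum_subset (Finset.subset_univ S)
      (fun v _ hv => by rw [hφ0]; simp [hv])]
    rw [Finset.sum_congr rfl hterm, Finset.sum_const, nsmul_eq_mul]
    rw [hn]
    exact mul_one_div_cancel hcard0.ne'
  have hipφ0r : ip φ0 r = 0 := by
    have h1 : ∀ v, (starRingEnd ℂ) (φ0 v) * r v = ((1 / Real.sqrt n : ℝ) : ℂ) * r v := by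
      intro v
      by_cases hv : v ∈ S
      · rw [hφ0]
        simp only [if_pos hv, Complex.conj_ofReal]
      · rw [hr0 v hv, mul_zero, mul_zero]
    unfold ip
    rw [Finset.sum_congr rfl (fun v _ => h1 v), ← Finset.mul_sum]
    rw [← Finset.sum_subset (Finset.subset_univ S) (fun v _ hv => hr0 v hv), hrsum, mul_zero]
  set ψp : V → ℂ := fun v => ψ v - (starRingEnd ℂ) I * φ0 v with hψp
  have hipψp : ip ψp r = ip ψ r := by
    unfold ip
    have expand : ∀ v, (starRingEnd ℂ) (ψp v) * r v
        = (starRingEnd ℂ) (ψ v) * r v - I * ((starRingEnd ℂ) (φ0 v) * r v) := by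
      intro v
      rw [hψp]
      simp only [map_sub, map_mul, Complex.conj_conj]
      ring
    rw [Finset.sum_congr rfl (fun v _ => expand v), Finset.sum_sub_distrib, ← Finset.mul_sum]
    rw [show (∑ v, (starRingEnd ℂ) (φ0 v) * r v) = ip φ0 r from rfl, hipφ0r, mul_zero, sub_zero]
  have e1 : ∀ g : V → ℂ, ((nsq g : ℝ) : ℂ) = ∑ v, (starRingEnd ℂ) (g v) * g v := by
    intro g
    unfold nsq
    push_cast
    exact Finset.sum_congr rfl fun v _ => (RCLike.conj_mul (g v)).symm
  have hψpn : nsq ψp = nsq ψ - ‖I‖ ^ 2 := by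
    have hcast : ((nsq ψp : ℝ) : ℂ) = ((nsq ψ - ‖I‖ ^ 2 : ℝ) : ℂ) := by
      rw [e1 ψp]
      have expand : ∀ v, (starRingEnd ℂ) (ψp v) * ψp v
          = (starRingEnd ℂ) (ψ v) * ψ v - I * ((starRingEnd ℂ) (φ0 v) * ψ v)
            - (starRingEnd ℂ) I * ((starRingEnd ℂ) (ψ v) * φ0 v)
            + ((starRingEnd ℂ) I * I) * ((starRingEnd ℂ) (φ0 v) * φ0 v) := by
        intro v
        rw [hψp]
        simp only [map_sub, map_mul, Complex.conj_conj]
        ring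
      rw [Finset.sum_congr rfl (fun v _ => expand v)]
      rw [Finset.sum_add_distrib, Finset.sum_sub_distrib, Finset.sum_sub_distrib,
        ← Finset.mul_sum, ← Finset.mul_sum, ← Finset.mul_sum]
      have k1 : (∑ v, (starRingEnd ℂ) (ψ v) * ψ v) = ((nsq ψ : ℝ) : ℂ) := (e1 ψ).symm
      have k2 : (∑ v, (starRingEnd ℂ) (φ0 v) * ψ v) = (starRingEnd ℂ) I := by
        rw [hI]
        unfold ip
        rw [map_sum]
        refine Finset.sum_congr rfl fun v _ => ?_
        rw [map_mul, Complex.conj_conj]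
        ring
      have k3 : (∑ v, (starRingEnd ℂ) (ψ v) * φ0 v) = I := rfl
      have k4 : (∑ v, (starRingEnd ℂ) (φ0 v) * φ0 v) = ((nsq φ0 : ℝ) : ℂ) := (e1 φ0).symm
      rw [k1, k2, k3, k4, hφ0n, Complex.ofReal_one, mul_one, RCLike.mul_conj, RCLike.conj_mul]
      simp
    exact Complex.ofReal_inj.mp hcast
  have hnsqr : nsq r = R := by
    unfold nsq
    rw [← Finset.sum_subset (Finset.subset_univ S)
      (fun v _ hv => by rw [hr0 v hv]; simp)]
  have hCS : ‖ip ψ r‖ ^ 2 ≤ (nsq ψ - ‖I‖ ^ 2) * R := by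
    calc ‖ip ψ r‖ ^ 2 = ‖ip ψp r‖ ^ 2 := by rw [hipψp]
      _ ≤ nsq ψp * nsq r := ip_cs ψp r
      _ = (nsq ψ - ‖I‖ ^ 2) * R := by rw [hψpn, hnsqr]
  have hns : n * ‖s‖ ^ 2 = ‖ip ψ r‖ ^ 2 / ‖I‖ ^ 2 := by
    rw [hs, norm_div, hD, norm_mul, Complex.norm_real, Real.norm_eq_abs,
      abs_of_nonneg (Real.sqrt_nonneg n)]
    rw [div_pow, mul_pow, Real.sq_sqrt hcard0.le]
    rw [← mul_div_assoc, mul_div_mul_left _ _ (ne_of_gt hcard0)]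
  have hIsq : (0:ℝ) < ‖I‖ ^ 2 := by positivity
  have hQ : ∑ v ∈ S, ‖f v - ip ψ f / D‖ ^ 2
      ≤ nsq ψ / (lam1 * ‖I‖ ^ 2) * gradSqOn w S f := by
    rw [hsum2, hns]
    have h1 : ‖ip ψ r‖ ^ 2 / ‖I‖ ^ 2 ≤ (nsq ψ - ‖I‖ ^ 2) * R / ‖I‖ ^ 2 :=
      (div_le_div_iff_of_pos_right hIsq).mpr hCS
    have hB : ‖I‖ ^ 2 ≠ 0 := ne_of_gt hIsq
    have h2 : R + (nsq ψ - ‖I‖ ^ 2) * R / ‖I‖ ^ 2 = nsq ψ / ‖I‖ ^ 2 * R := by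
      rw [sub_mul, sub_div, mul_comm (‖I‖ ^ 2) R, mul_div_assoc R _ _, div_self hB, mul_one]
      ring
    have h3 : (0:ℝ) ≤ nsq ψ / ‖I‖ ^ 2 := div_nonneg (nsq_nonneg ψ) (sq_nonneg _)
    have h4 : R ≤ gradSqOn w S f / lam1 := by
      rw [le_div_iff₀ hlam1]
      linarith [hgap]
    calc R + ‖ip ψ r‖ ^ 2 / ‖I‖ ^ 2
        ≤ R + (nsq ψ - ‖I‖ ^ 2) * R / ‖I‖ ^ 2 := by linarith [h1]
      _ = nsq ψ / ‖I‖ ^ 2 * R := h2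
      _ ≤ nsq ψ / ‖I‖ ^ 2 * (gradSqOn w S f / lam1) := mul_le_mul_of_nonneg_left h4 h3
      _ = nsq ψ / (lam1 * ‖I‖ ^ 2) * gradSqOn w S f := by
          rw [div_mul_eq_mul_div, div_mul_eq_mul_div, mul_div_assoc, div_div]
          ring_nf
  have hTh : (0:ℝ) ≤ nsq ψ / (lam1 * ‖I‖ ^ 2) :=
    div_nonneg (nsq_nonneg ψ) (mul_nonneg hlam1.le (sq_nonneg _))
  have hL2 : (∑ v ∈ S, ‖f v - ip ψ f / D‖) ^ 2
      ≤ n * (nsq ψ / (lam1 * ‖I‖ ^ 2) * gradSqOn w S f) := by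
    calc (∑ v ∈ S, ‖f v - ip ψ f / D‖) ^ 2
        ≤ S.card * ∑ v ∈ S, ‖f v - ip ψ f / D‖ ^ 2 := sq_sum_le_card_mul_sum_sq
      _ ≤ n * (nsq ψ / (lam1 * ‖I‖ ^ 2) * gradSqOn w S f) := by
          rw [hn]
          exact mul_le_mul_of_nonneg_left hQ hcard0.le
  have hLnn : (0:ℝ) ≤ ∑ v ∈ S, ‖f v - ip ψ f / D‖ :=
    Finset.sum_nonneg fun _ _ => norm_nonneg _
  calc ∑ v ∈ S, ‖f v - ip ψ f / D‖
      = Real.sqrt ((∑ v ∈ S, ‖f v - ip ψ f / D‖) ^ 2) := (Real.sqrt_sq hLnn).symm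
    _ ≤ Real.sqrt (n * (nsq ψ / (lam1 * ‖I‖ ^ 2) * gradSqOn w S f)) :=
        Real.sqrt_le_sqrt hL2
    _ = Real.sqrt (n * (nsq ψ / (lam1 * ‖I‖ ^ 2))) * Real.sqrt (gradSqOn w S f) := by
        rw [← mul_assoc, Real.sqrt_mul (mul_nonneg hcard0.le hTh)]

end Aux3

/-- Theorem 5.1 (`ℓ¹` Poincaré-type inequality): with `C_Ξ = √(|J|·max_j(|S_j|Θ_j))`,
`Θ_j = ‖ψ_j‖²/(λ_{1,j}|⟨ψ_j,φ_{0,j}⟩|²)`, for every `ω > 0` and every `f` with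
`‖∇f‖ ≤ √ω ‖f‖`, one has `Σ_j Σ_{v∈S_j}|f(v) − ⟨ζ_j,f⟩| ≤ √ω · C_Ξ · Σ_v |f(v)|`. -/
theorem stmt9 {V J : Type*} [Fintype V] [DecidableEq V] [Fintype J] [Nonempty J]
    (w : V → V → ℝ)
    (hsymm : ∀ u v, w u v = w v u) (hnn : ∀ u v, 0 ≤ w u v) (hdiag : ∀ v, w v v = 0)
    (hconn : GraphConnected w)
    (S : J → Finset V)
    (hdisj : ∀ i j, i ≠ j → Disjoint (S i) (S j))
    (hcover : ∀ v : V, ∃ j, v ∈ S j)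
    (hconnS : ∀ j, GraphConnectedOn w (S j)) (hcardS : ∀ j, 1 < (S j).card)
    (ψ : J → V → ℂ) (hsupp : ∀ j, ∀ v ∉ S j, ψ j v = 0)
    (φ0 : J → V → ℂ)
    (hφ0 : ∀ j, φ0 j = fun v => if v ∈ S j then ((1 / Real.sqrt ((S j).card) : ℝ) : ℂ) else 0)
    (hnz : ∀ j, ip (ψ j) (φ0 j) ≠ 0)
    (lam1 : J → ℝ) (hlam : ∀ j, IsFirstNonzeroEigOn w (S j) (lam1 j))
    (CΞ : ℝ)
    (hC : CΞ = Real.sqrt ((Fintype.card J : ℝ) *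
      Finset.univ.sup' Finset.univ_nonempty
        (fun j => ((S j).card : ℝ) * (nsq (ψ j) / (lam1 j * ‖ip (ψ j) (φ0 j)‖ ^ 2)))))
    (ω : ℝ) (hω : 0 < ω)
    (f : V → ℂ) (hf : Real.sqrt (gradSq w f) ≤ Real.sqrt ω * Real.sqrt (nsq f)) :
    ∑ j, ∑ v ∈ S j,
        ‖f v - ip (ψ j) f / ((Real.sqrt ((S j).card) : ℂ) * ip (ψ j) (φ0 j))‖ ≤
      Real.sqrt ω * CΞ * ∑ v, ‖f v‖ := by
  classical
  set M : ℝ := Finset.univ.sup' Finset.univ_nonempty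
      (fun j => ((S j).card : ℝ) * (nsq (ψ j) / (lam1 j * ‖ip (ψ j) (φ0 j)‖ ^ 2))) with hM
  have hMle : ∀ j, ((S j).card : ℝ) * (nsq (ψ j) / (lam1 j * ‖ip (ψ j) (φ0 j)‖ ^ 2)) ≤ M := by
    intro j
    rw [hM]
    exact Finset.le_sup'
      (fun j => ((S j).card : ℝ) * (nsq (ψ j) / (lam1 j * ‖ip (ψ j) (φ0 j)‖ ^ 2)))
      (Finset.mem_univ j)
  obtain ⟨j0⟩ := ‹Nonempty J›
  have hMnn : 0 ≤ M := by
    refine le_trans ?_ (hMle j0)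
    have h1 : (0:ℝ) ≤ nsq (ψ j0) / (lam1 j0 * ‖ip (ψ j0) (φ0 j0)‖ ^ 2) :=
      div_nonneg (nsq_nonneg _) (mul_nonneg (hlam j0).1.le (sq_nonneg _))
    positivity
  have hpiece : ∀ j, ∑ v ∈ S j,
      ‖f v - ip (ψ j) f / ((Real.sqrt ((S j).card) : ℂ) * ip (ψ j) (φ0 j))‖
      ≤ Real.sqrt M * Real.sqrt (gradSqOn w (S j) f) := by
    intro j
    refine le_trans (piece w hsymm hnn (S j) (hconnS j) (hcardS j) (ψ j) (hsupp j)
      (φ0 j) (hφ0 j) (hnz j) (lam1 j) (hlam j) f) ?_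
    exact mul_le_mul_of_nonneg_right (Real.sqrt_le_sqrt (hMle j)) (Real.sqrt_nonneg _)
  have hsum : ∑ j, ∑ v ∈ S j,
      ‖f v - ip (ψ j) f / ((Real.sqrt ((S j).card) : ℂ) * ip (ψ j) (φ0 j))‖
      ≤ Real.sqrt M * ∑ j, Real.sqrt (gradSqOn w (S j) f) := by
    rw [Finset.mul_sum]
    exact Finset.sum_le_sum fun j _ => hpiece j
  -- sum of piece gradients is at most total gradient
  have hgradsum : ∑ j, gradSqOn w (S j) f ≤ gradSq w f := by
    unfold gradSqOn gradSq
    rw [← Finset.mul_sum]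
    refine mul_le_mul_of_nonneg_left ?_ (by norm_num)
    have step1 : ∀ j, ∑ u ∈ S j, ∑ v ∈ S j, ‖f u - f v‖ ^ 2 * w u v
        ≤ ∑ u ∈ S j, ∑ v, ‖f u - f v‖ ^ 2 * w u v := by
      intro j
      refine Finset.sum_le_sum fun u _ => ?_
      exact Finset.sum_le_sum_of_subset_of_nonneg (Finset.subset_univ _)
        (fun v _ _ => mul_nonneg (sq_nonneg _) (hnn u v))
    refine le_trans (Finset.sum_le_sum fun j _ => step1 j) ?_
    have hcov : Finset.univ.biUnion S = Finset.univ := by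
      ext u
      simp only [Finset.mem_biUnion, Finset.mem_univ, true_and, iff_true]
      exact hcover u
    have hpd : (↑(Finset.univ : Finset J) : Set J).PairwiseDisjoint S :=
      fun i _ j _ hij => hdisj i j hij
    rw [← Finset.sum_biUnion hpd, hcov]
  have hsqrt_sum : ∑ j, Real.sqrt (gradSqOn w (S j) f)
      ≤ Real.sqrt (Fintype.card J) * Real.sqrt (gradSq w f) := by
    have h1 : (∑ j, Real.sqrt (gradSqOn w (S j) f)) ^ 2
        ≤ (Fintype.card J : ℝ) * ∑ j, gradSqOn w (S j) f := by
      have h2 := sq_sum_le_card_mul_sum_sq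
        (s := (Finset.univ : Finset J)) (f := fun j => Real.sqrt (gradSqOn w (S j) f))
      have h3 : ∑ j, Real.sqrt (gradSqOn w (S j) f) ^ 2 = ∑ j, gradSqOn w (S j) f :=
        Finset.sum_congr rfl fun j _ => Real.sq_sqrt (gradSqOn_nonneg w hnn (S j) f)
      rw [h3] at h2
      simpa [Finset.card_univ] using h2
    have h4 : (∑ j, Real.sqrt (gradSqOn w (S j) f)) ^ 2
        ≤ (Fintype.card J : ℝ) * gradSq w f :=
      le_trans h1 (mul_le_mul_of_nonneg_left hgradsum (by positivity))
    have h5 : (0:ℝ) ≤ ∑ j, Real.sqrt (gradSqOn w (S j) f) :=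
      Finset.sum_nonneg fun j _ => Real.sqrt_nonneg _
    calc ∑ j, Real.sqrt (gradSqOn w (S j) f)
        = Real.sqrt ((∑ j, Real.sqrt (gradSqOn w (S j) f)) ^ 2) := (Real.sqrt_sq h5).symm
      _ ≤ Real.sqrt ((Fintype.card J : ℝ) * gradSq w f) := Real.sqrt_le_sqrt h4
      _ = Real.sqrt (Fintype.card J) * Real.sqrt (gradSq w f) := Real.sqrt_mul (by positivity) _
  have hCeq : Real.sqrt M * Real.sqrt (Fintype.card J) = CΞ := by
    rw [hC, Real.sqrt_mul (by positivity) M]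
    ring
  have hCnn : 0 ≤ CΞ := by rw [hC]; exact Real.sqrt_nonneg _
  have hl1 : Real.sqrt (nsq f) ≤ ∑ v, ‖f v‖ := by
    have h1 : nsq f ≤ (∑ v, ‖f v‖) ^ 2 := by
      unfold nsq
      exact Finset.sum_sq_le_sq_sum_of_nonneg fun v _ => norm_nonneg _
    calc Real.sqrt (nsq f) ≤ Real.sqrt ((∑ v, ‖f v‖) ^ 2) := Real.sqrt_le_sqrt h1
      _ = ∑ v, ‖f v‖ := Real.sqrt_sq (Finset.sum_nonneg fun v _ => norm_nonneg _)
  calc ∑ j, ∑ v ∈ S j,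
        ‖f v - ip (ψ j) f / ((Real.sqrt ((S j).card) : ℂ) * ip (ψ j) (φ0 j))‖
      ≤ Real.sqrt M * ∑ j, Real.sqrt (gradSqOn w (S j) f) := hsum
    _ ≤ Real.sqrt M * (Real.sqrt (Fintype.card J) * Real.sqrt (gradSq w f)) :=
        mul_le_mul_of_nonneg_left hsqrt_sum (Real.sqrt_nonneg _)
    _ = CΞ * Real.sqrt (gradSq w f) := by rw [← mul_assoc, hCeq]
    _ ≤ CΞ * (Real.sqrt ω * Real.sqrt (nsq f)) := mul_le_mul_of_nonneg_left hf hCnn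
    _ ≤ CΞ * (Real.sqrt ω * ∑ v, ‖f v‖) :=
        mul_le_mul_of_nonneg_left
          (mul_le_mul_of_nonneg_left hl1 (Real.sqrt_nonneg _)) hCnn
    _ = Real.sqrt ω * CΞ * ∑ v, ‖f v‖ := by ring
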